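/- Let D ≥ 2, λ ≥ 0, p ≥ 1, and let ω : ℝ → ℝ^p, γ_1, …, γ_{D−1} : ℝ → ℝ be differentiable curves and g : ℝ → ℝ^p any curve, satisfying the gradient flow equations ω'(t) = −((∏_{d=1}^{D−1} γ_d(t))·g(t) + (2λ/D)·ω(t)) and, for each d ∈ {1,…,D−1}, γ_d'(t) = −((∏_{d'≠d} γ_{d'}(t))·⟨ω(t), g(t)⟩ + (2λ/D)·γ_d(t)). Then for any two distinct indices d, d' ∈ {1,…,D−1}, the scalar–scalar imbalance I(t) = γ_d(t)² − γ_{d'}(t)² satisfies the differential equation I'(t) = −(4λ/D)·I(t), and for any d' ∈ {1,…,D−1}, the vector–scalar imbalance Ĩ(t) = ‖ω(t)‖₂² − γ_{d'}(t)² satisfies Ĩ'(t) = −(4λ/D)·Ĩ(t). -/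

import Mathlib

open RealInnerProductSpace

/-- under the gradient flow of the `L₂`-regularized `D`-gated objective,
each pair-wise imbalance satisfies the linear ODE `I' = -(4λ/D)·I`. -/
theorem stmt_9 (D p : ℕ) (hD : 2 ≤ D) (hp : 1 ≤ p) (lam : ℝ) (hlam : 0 ≤ lam)
    (ω : ℝ → EuclideanSpace ℝ (Fin p)) (γ : Fin (D - 1) → ℝ → ℝ)
    (g : ℝ → EuclideanSpace ℝ (Fin p))
    (hω : ∀ t, HasDerivAt ω
      (-((∏ d, γ d t) • g t + (2 * lam / (D : ℝ)) • ω t)) t)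
    (hγ : ∀ (d : Fin (D - 1)) (t : ℝ), HasDerivAt (γ d)
      (-((∏ d' ∈ Finset.univ.erase d, γ d' t) * ⟪ω t, g t⟫ + (2 * lam / (D : ℝ)) * γ d t)) t) :
    (∀ (d d' : Fin (D - 1)), d ≠ d' → ∀ t : ℝ,
      HasDerivAt (fun s => γ d s ^ 2 - γ d' s ^ 2)
        (-(4 * lam / (D : ℝ)) * (γ d t ^ 2 - γ d' t ^ 2)) t) ∧
    (∀ (d' : Fin (D - 1)) (t : ℝ),
      HasDerivAt (fun s => ‖ω s‖ ^ 2 - γ d' s ^ 2)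
        (-(4 * lam / (D : ℝ)) * (‖ω t‖ ^ 2 - γ d' t ^ 2)) t) := by
  -- derivative of γ d ^ 2
  have hsq : ∀ (d : Fin (D - 1)) (t : ℝ), HasDerivAt (fun s => γ d s ^ 2)
      (-2 * (∏ d', γ d' t) * ⟪ω t, g t⟫ - (4 * lam / (D : ℝ)) * γ d t ^ 2) t := by
    intro d t
    have h := (hγ d t).pow 2
    refine h.congr_deriv ?_
    have hprod : (∏ d' ∈ Finset.univ.erase d, γ d' t) * γ d t = ∏ d', γ d' t :=
      Finset.prod_erase_mul _ _ (Finset.mem_univ d)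
    push_cast
    linear_combination (-2 * (inner ℝ (ω t) (g t) : ℝ)) * hprod
  have hnsq : ∀ t : ℝ, HasDerivAt (fun s => ‖ω s‖ ^ 2)
      (-2 * (∏ d', γ d' t) * ⟪ω t, g t⟫ - (4 * lam / (D : ℝ)) * ‖ω t‖ ^ 2) t := by
    intro t
    have h := (hω t).inner ℝ (hω t)
    have heq : (fun s => ‖ω s‖ ^ 2) = fun s => ⟪ω s, ω s⟫ := by
      funext s; exact (real_inner_self_eq_norm_sq _).symm
    rw [heq]
    refine h.congr_deriv ?_
    rw [inner_neg_left, inner_neg_right, inner_add_left, inner_add_right,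
      real_inner_smul_left, real_inner_smul_right, real_inner_smul_left,
      real_inner_smul_right, real_inner_self_eq_norm_sq, real_inner_comm (g t) (ω t)]
    ring
  constructor
  · intro d d' _ t
    have h := (hsq d t).sub (hsq d' t)
    refine h.congr_deriv ?_; ring
  · intro d' t
    have h := (hnsq t).sub (hsq d' t)
    refine h.congr_deriv ?_; ring
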